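/- arXiv:2205.14617 — 2 statements merged into one kernel-verified Lean document; each statement's English description precedes it below -/
import Mathlib

section
/- Let w = r g(θ) with g(θ) = a sin(μθ), μ ∈ ℤ, μ ≥ 0, and φ = Dλ ln r with λ = μ²−1. Define the tensor field a(r,θ) = (1/r)[(g + g'' + λg) e_θ⊗e_θ − λ g' e_θ⊗e_r] on ℝ²∖{0}. Then div a = (1/r²)[(g''' + (λ+1)g') e_θ − (g'' + (λ+1)g) e_r], and for any x₀ ∈ ℝ² and any ε > 0, the loop integral ∫_{∂B_ε} (a ν − (x − x₀)⟨div a, ν⟩) dl = 0. -/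
open Real MeasureTheory

noncomputable def pd1 (f : ℝ → ℝ → ℝ) : ℝ → ℝ → ℝ := fun x y => deriv (fun t => f t y) x

noncomputable def pd2 (f : ℝ → ℝ → ℝ) : ℝ → ℝ → ℝ := fun x y => deriv (fun t => f x t) y

/-- The polar angle of the point (x,y). -/
noncomputable def polarAngle (x y : ℝ) : ℝ := Complex.arg (x + y * Complex.I)

/-- The i-th component of a planar vector. -/
def comp (v : ℝ × ℝ) : Fin 2 → ℝ := fun i => if i = 0 then v.1 else v.2

/-- Radial unit vector. -/
noncomputable def eR (θ : ℝ) : ℝ × ℝ := (Real.cos θ, Real.sin θ)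

/-- Angular unit vector. -/
noncomputable def eTh (θ : ℝ) : ℝ × ℝ := (-Real.sin θ, Real.cos θ)

/-! ### Auxiliary lemmas -/

lemma hP1 (n : ℕ) (x y : ℝ) :
    HasDerivAt (fun t : ℝ => ((((t:ℂ) + (y:ℂ) * Complex.I)) ^ n).re)
      (((n:ℂ) * (((x:ℂ) + (y:ℂ) * Complex.I)) ^ (n - 1)).re) x := by
  have h0 : HasDerivAt (fun z : ℂ => (z + (y:ℂ) * Complex.I) ^ n)
      ((n:ℂ) * (((x:ℂ) + (y:ℂ) * Complex.I)) ^ (n - 1)) (x:ℂ) := by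
    simpa using (((hasDerivAt_id ((x:ℂ))).add_const ((y:ℂ) * Complex.I)).fun_pow n)
  exact (Complex.reCLM.hasFDerivAt.comp_hasDerivAt x h0.comp_ofReal)

lemma hP2 (n : ℕ) (x y : ℝ) :
    HasDerivAt (fun t : ℝ => ((((x:ℂ) + (t:ℂ) * Complex.I)) ^ n).re)
      ((((n:ℂ) * (((x:ℂ) + (y:ℂ) * Complex.I)) ^ (n - 1)) * Complex.I).re) y := by
  have h0 : HasDerivAt (fun z : ℂ => ((x:ℂ) + z * Complex.I) ^ n)
      (((n:ℂ) * (((x:ℂ) + (y:ℂ) * Complex.I)) ^ (n - 1)) * Complex.I) (y:ℂ) := by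
    have := ((((hasDerivAt_id ((y:ℂ))).mul_const Complex.I).const_add ((x:ℂ))).fun_pow n)
    simpa [mul_comm, mul_assoc, mul_left_comm] using this
  exact (Complex.reCLM.hasFDerivAt.comp_hasDerivAt y h0.comp_ofReal)

lemma euler (n : ℕ) (x y : ℝ) :
    x * ((n:ℂ) * (((x:ℂ) + (y:ℂ) * Complex.I)) ^ (n - 1)).re
      + y * (((n:ℂ) * (((x:ℂ) + (y:ℂ) * Complex.I)) ^ (n - 1)) * Complex.I).re
    = n * ((((x:ℂ) + (y:ℂ) * Complex.I)) ^ n).re := by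
  cases n with
  | zero => simp
  | succ m =>
      rw [pow_succ]
      simp [Complex.mul_re, Complex.mul_im, Complex.add_re, Complex.add_im]
      ring

lemma hS1 (q x y : ℝ) (h : x ^ 2 + y ^ 2 ≠ 0) :
    HasDerivAt (fun t : ℝ => (t ^ 2 + y ^ 2) ^ q)
      (q * (x ^ 2 + y ^ 2) ^ (q - 1) * (2 * x)) x := by
  have h0 := Real.hasDerivAt_rpow_const (x := x ^ 2 + y ^ 2) (p := q) (Or.inl h)
  have h1 : HasDerivAt (fun t : ℝ => t ^ 2 + y ^ 2) (2 * x) x := by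
    simpa using ((hasDerivAt_pow 2 x).add_const (y ^ 2))
  simpa [Function.comp_def] using h0.comp x h1

lemma hS2 (q x y : ℝ) (h : x ^ 2 + y ^ 2 ≠ 0) :
    HasDerivAt (fun t : ℝ => (x ^ 2 + t ^ 2) ^ q)
      (q * (x ^ 2 + y ^ 2) ^ (q - 1) * (2 * y)) y := by
  have h0 := Real.hasDerivAt_rpow_const (x := x ^ 2 + y ^ 2) (p := q) (Or.inl h)
  have h1 : HasDerivAt (fun t : ℝ => x ^ 2 + t ^ 2) (2 * y) y := by
    simpa using ((hasDerivAt_pow 2 y).const_add (x ^ 2))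
  simpa [Function.comp_def] using h0.comp y h1

lemma div_free0 (n : ℕ) (C x y : ℝ) (h : x ^ 2 + y ^ 2 ≠ 0) :
    pd1 (fun a b => C * -b * a * ((((a:ℂ) + (b:ℂ) * Complex.I)) ^ n).re
        * (a ^ 2 + b ^ 2) ^ (-((n:ℝ) + 3) / 2)) x y
      + pd2 (fun a b => C * -b * b * ((((a:ℂ) + (b:ℂ) * Complex.I)) ^ n).re
        * (a ^ 2 + b ^ 2) ^ (-((n:ℝ) + 3) / 2)) x y = 0 := by
  have hpos : (0:ℝ) < x ^ 2 + y ^ 2 := lt_of_le_of_ne (by positivity) (Ne.symm h)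
  have h1 : HasDerivAt (fun t : ℝ => C * -y * t * ((((t:ℂ) + (y:ℂ) * Complex.I)) ^ n).re
      * (t ^ 2 + y ^ 2) ^ (-((n:ℝ) + 3) / 2)) _ x :=
    (((hasDerivAt_const x (C * -y)).mul (hasDerivAt_id x)).mul (hP1 n x y)).mul (hS1 _ x y h)
  have h2 : HasDerivAt (fun t : ℝ => C * -t * t * ((((x:ℂ) + (t:ℂ) * Complex.I)) ^ n).re
      * (x ^ 2 + t ^ 2) ^ (-((n:ℝ) + 3) / 2)) _ y :=
    ((((hasDerivAt_id y).neg.const_mul C).mul (hasDerivAt_id y)).mul (hP2 n x y)).mul (hS2 _ x y h)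
  have hE := euler n x y
  have hs : (x ^ 2 + y ^ 2) ^ (-((n:ℝ) + 3) / 2)
      = (x ^ 2 + y ^ 2) ^ (-((n:ℝ) + 3) / 2 - 1) * (x ^ 2 + y ^ 2) := by
    rw [show (-((n:ℝ) + 3) / 2) = (-((n:ℝ) + 3) / 2 - 1) + 1 by ring, Real.rpow_add hpos,
      Real.rpow_one]
    ring_nf
  unfold pd1 pd2
  rw [h1.deriv, h2.deriv]
  simp only [id_eq, Pi.mul_apply, Pi.neg_apply]
  rw [hs]
  linear_combination (C * -y * ((x ^ 2 + y ^ 2) ^ (-((n:ℝ) + 3) / 2 - 1)) * (x ^ 2 + y ^ 2)) * hE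

lemma div_free1 (n : ℕ) (C x y : ℝ) (h : x ^ 2 + y ^ 2 ≠ 0) :
    pd1 (fun a b => C * a * a * ((((a:ℂ) + (b:ℂ) * Complex.I)) ^ n).re
        * (a ^ 2 + b ^ 2) ^ (-((n:ℝ) + 3) / 2)) x y
      + pd2 (fun a b => C * a * b * ((((a:ℂ) + (b:ℂ) * Complex.I)) ^ n).re
        * (a ^ 2 + b ^ 2) ^ (-((n:ℝ) + 3) / 2)) x y = 0 := by
  have hpos : (0:ℝ) < x ^ 2 + y ^ 2 := lt_of_le_of_ne (by positivity) (Ne.symm h)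
  have h1 : HasDerivAt (fun t : ℝ => C * t * t * ((((t:ℂ) + (y:ℂ) * Complex.I)) ^ n).re
      * (t ^ 2 + y ^ 2) ^ (-((n:ℝ) + 3) / 2)) _ x :=
    ((((hasDerivAt_id x).const_mul C).mul (hasDerivAt_id x)).mul (hP1 n x y)).mul (hS1 _ x y h)
  have h2 : HasDerivAt (fun t : ℝ => C * x * t * ((((x:ℂ) + (t:ℂ) * Complex.I)) ^ n).re
      * (x ^ 2 + t ^ 2) ^ (-((n:ℝ) + 3) / 2)) _ y :=
    (((hasDerivAt_const y (C * x)).mul (hasDerivAt_id y)).mul (hP2 n x y)).mul (hS2 _ x y h)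
  have hE := euler n x y
  have hs : (x ^ 2 + y ^ 2) ^ (-((n:ℝ) + 3) / 2)
      = (x ^ 2 + y ^ 2) ^ (-((n:ℝ) + 3) / 2 - 1) * (x ^ 2 + y ^ 2) := by
    rw [show (-((n:ℝ) + 3) / 2) = (-((n:ℝ) + 3) / 2 - 1) + 1 by ring, Real.rpow_add hpos,
      Real.rpow_one]
    ring_nf
  unfold pd1 pd2
  rw [h1.deriv, h2.deriv]
  simp only [id_eq, Pi.mul_apply, Pi.neg_apply]
  rw [hs]
  linear_combination (C * x * ((x ^ 2 + y ^ 2) ^ (-((n:ℝ) + 3) / 2 - 1)) * (x ^ 2 + y ^ 2)) * hE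

lemma Icos (c : ℝ) (hc : c ≠ 0) (h0 : Real.sin (c * (2 * π)) = 0) :
    ∫ θ in (0:ℝ)..(2 * π), Real.cos (c * θ) = 0 := by
  rw [intervalIntegral.integral_comp_mul_left (fun x => Real.cos x) hc]
  simp [integral_cos, h0]

lemma Isin (c : ℝ) (hc : c ≠ 0) (h0 : Real.cos (c * (2 * π)) = 1) :
    ∫ θ in (0:ℝ)..(2 * π), Real.sin (c * θ) = 0 := by
  rw [intervalIntegral.integral_comp_mul_left (fun x => Real.sin x) hc]
  simp [integral_sin, h0]

lemma Icoscos (c : ℝ) (h1 : c + 1 ≠ 0) (h2 : c - 1 ≠ 0)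
    (hs1 : Real.sin ((c + 1) * (2 * π)) = 0) (hs2 : Real.sin ((c - 1) * (2 * π)) = 0) :
    ∫ θ in (0:ℝ)..(2 * π), Real.cos (c * θ) * Real.cos θ = 0 := by
  have key : ∀ θ : ℝ, Real.cos (c * θ) * Real.cos θ
      = (Real.cos ((c + 1) * θ) + Real.cos ((c - 1) * θ)) / 2 := by
    intro θ
    rw [show (c + 1) * θ = c * θ + θ by ring, show (c - 1) * θ = c * θ - θ by ring,
      Real.cos_add, Real.cos_sub]
    ring
  simp_rw [key]
  rw [intervalIntegral.integral_div, intervalIntegral.integral_add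
    ((by fun_prop : Continuous fun x : ℝ => Real.cos ((c + 1) * x)).intervalIntegrable _ _)
    ((by fun_prop : Continuous fun x : ℝ => Real.cos ((c - 1) * x)).intervalIntegrable _ _),
    Icos _ h1 hs1, Icos _ h2 hs2]
  norm_num

lemma Icossin (c : ℝ) (h1 : c + 1 ≠ 0) (h2 : c - 1 ≠ 0)
    (hs1 : Real.cos ((c + 1) * (2 * π)) = 1) (hs2 : Real.cos ((c - 1) * (2 * π)) = 1) :
    ∫ θ in (0:ℝ)..(2 * π), Real.cos (c * θ) * Real.sin θ = 0 := by
  have key : ∀ θ : ℝ, Real.cos (c * θ) * Real.sin θ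
      = (Real.sin ((c + 1) * θ) - Real.sin ((c - 1) * θ)) / 2 := by
    intro θ
    rw [show (c + 1) * θ = c * θ + θ by ring, show (c - 1) * θ = c * θ - θ by ring,
      Real.sin_add, Real.sin_sub]
    ring
  simp_rw [key]
  rw [intervalIntegral.integral_div, intervalIntegral.integral_sub
    ((by fun_prop : Continuous fun x : ℝ => Real.sin ((c + 1) * x)).intervalIntegrable _ _)
    ((by fun_prop : Continuous fun x : ℝ => Real.sin ((c - 1) * x)).intervalIntegrable _ _),
    Isin _ h1 hs1, Isin _ h2 hs2]
  norm_num

lemma sin2pi (m : ℕ) : Real.sin ((m : ℝ) * (2 * π)) = 0 := by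
  have : (m : ℝ) * (2 * π) = (2 * m : ℤ) * π := by push_cast; ring
  rw [this, Real.sin_int_mul_pi]

lemma cos2pi (m : ℕ) : Real.cos ((m : ℝ) * (2 * π)) = 1 := by
  have : ((m:ℝ)) * (2 * π) = ((m : ℤ) : ℝ) * (2 * π) := by push_cast; ring
  rw [this, Real.cos_int_mul_two_pi]

lemma cos_n_arg (n : ℕ) (x y : ℝ) :
    ((((x:ℂ) + (y:ℂ) * Complex.I)) ^ n).re
      = Real.sqrt (x ^ 2 + y ^ 2) ^ n * Real.cos (n * polarAngle x y) := by
  conv_lhs => rw [← Complex.norm_mul_exp_arg_mul_I ((x:ℂ) + (y:ℂ) * Complex.I)]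
  rw [mul_pow, ← Complex.exp_nat_mul,
    show (n:ℂ) * (↑(Complex.arg ((x:ℂ) + (y:ℂ) * Complex.I)) * Complex.I)
      = ((n * Complex.arg ((x:ℂ) + (y:ℂ) * Complex.I) : ℝ) : ℂ) * Complex.I by push_cast; ring,
    ← Complex.ofReal_pow, Complex.re_ofReal_mul, Complex.exp_ofReal_mul_I_re,
    Complex.norm_add_mul_I]
  rfl

lemma Pn_circle (n : ℕ) (ε θ : ℝ) :
    ((((ε * Real.cos θ : ℝ):ℂ) + ((ε * Real.sin θ : ℝ):ℂ) * Complex.I) ^ n).re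
      = ε ^ n * Real.cos (n * θ) := by
  have hz : (((ε * Real.cos θ : ℝ):ℂ) + ((ε * Real.sin θ : ℝ):ℂ) * Complex.I)
      = (ε:ℂ) * Complex.exp ((θ:ℝ) * Complex.I) := by
    apply Complex.ext <;>
      simp [Complex.exp_ofReal_mul_I_re, Complex.exp_ofReal_mul_I_im, Complex.mul_re,
        Complex.mul_im, Complex.cos_ofReal_re, Complex.sin_ofReal_re]
  rw [hz, mul_pow, ← Complex.exp_nat_mul,
    show (n:ℂ) * ((θ:ℝ) * Complex.I) = ((n * θ : ℝ) : ℂ) * Complex.I by push_cast; ring,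
    ← Complex.ofReal_pow, Complex.re_ofReal_mul, Complex.exp_ofReal_mul_I_re]

/-- For the conical solution w = r g(θ), g = a₀ sin(μθ) (μ a nonnegative integer) and
stress function φ = Dλ ln r with λ = μ²−1, the tensor field
a = (1/r)[(g + g'' + λg) e_θ⊗e_θ − λ g' e_θ⊗e_r] has divergence
div a = (1/r²)[(g''' + (λ+1)g') e_θ − (g'' + (λ+1)g) e_r], and the loop integral
∫_{∂B_ε} (a ν − (x − x₀)⟨div a, ν⟩) dl vanishes for every center x₀ and radius ε > 0. -/
theorem conical_no_point_force (a₀ : ℝ) (μ : ℤ) (hμ : 0 ≤ μ) (g : ℝ → ℝ)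
    (hg : g = fun θ => a₀ * Real.sin ((μ : ℝ) * θ)) (lam : ℝ) (hlam : lam = (μ : ℝ) ^ 2 - 1)
    (A : Fin 2 → Fin 2 → ℝ → ℝ → ℝ)
    (hA : ∀ i j x y, A i j x y =
      (1 / Real.sqrt (x ^ 2 + y ^ 2)) *
        ((g (polarAngle x y) + deriv (deriv g) (polarAngle x y) + lam * g (polarAngle x y))
            * comp (eTh (polarAngle x y)) i * comp (eTh (polarAngle x y)) j
          - lam * deriv g (polarAngle x y)
            * comp (eTh (polarAngle x y)) i * comp (eR (polarAngle x y)) j)) :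
    (∀ r > (0:ℝ), ∀ θ : ℝ, ∀ i : Fin 2,
      pd1 (A i 0) (r * Real.cos θ) (r * Real.sin θ)
          + pd2 (A i 1) (r * Real.cos θ) (r * Real.sin θ)
        = (1 / r ^ 2) *
            ((deriv (deriv (deriv g)) θ + (lam + 1) * deriv g θ) * comp (eTh θ) i
              - (deriv (deriv g) θ + (lam + 1) * g θ) * comp (eR θ) i)) ∧
    (∀ x₀ : ℝ × ℝ, ∀ ε > (0:ℝ), ∀ i : Fin 2,
      (∫ θ in (0:ℝ)..(2 * π), ε *
        ((∑ j : Fin 2, A i j (ε * Real.cos θ) (ε * Real.sin θ) * comp (eR θ) j)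
          - comp ((ε * Real.cos θ, ε * Real.sin θ) - x₀) i *
            (∑ j : Fin 2,
              (pd1 (A j 0) (ε * Real.cos θ) (ε * Real.sin θ)
                + pd2 (A j 1) (ε * Real.cos θ) (ε * Real.sin θ)) * comp (eR θ) j))) = 0) := by
  obtain ⟨n, hn⟩ : ∃ n : ℕ, (μ:ℝ) = (n:ℝ) :=
    ⟨μ.toNat, by exact_mod_cast congrArg (fun z : ℤ => (z:ℝ)) (Int.toNat_of_nonneg hμ).symm⟩
  -- derivatives of g
  have hder : ∀ θ : ℝ, HasDerivAt (fun t : ℝ => (μ:ℝ) * t) ((μ:ℝ)) θ := fun θ => by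
    simpa using (hasDerivAt_id θ).const_mul ((μ:ℝ))
  have hg1 : deriv g = fun θ => a₀ * (Real.cos ((μ:ℝ) * θ) * (μ:ℝ)) := by
    funext θ
    rw [hg]
    exact (((Real.hasDerivAt_sin ((μ:ℝ) * θ)).comp θ (hder θ)).const_mul a₀).deriv
  have hg2 : deriv (deriv g) = fun θ => a₀ * (-Real.sin ((μ:ℝ) * θ) * (μ:ℝ) * (μ:ℝ)) := by
    funext θ
    rw [hg1]
    exact ((((Real.hasDerivAt_cos ((μ:ℝ) * θ)).comp θ (hder θ)).mul_const
      ((μ:ℝ))).const_mul a₀).deriv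
  have hg3 : deriv (deriv (deriv g))
      = fun θ => a₀ * (-(Real.cos ((μ:ℝ) * θ) * (μ:ℝ)) * (μ:ℝ) * (μ:ℝ)) := by
    funext θ
    rw [hg2]
    exact (((((Real.hasDerivAt_sin ((μ:ℝ) * θ)).comp θ (hder θ)).neg.mul_const
      ((μ:ℝ))).mul_const ((μ:ℝ))).const_mul a₀).deriv
  -- the representation of A
  have hAF : ∀ (i j : Fin 2) (x y : ℝ), A i j x y
      = -(lam * (a₀ * (n:ℝ))) * (if i = 0 then -y else x) * (if j = 0 then x else y)
        * ((((x:ℂ) + (y:ℂ) * Complex.I)) ^ n).re * (x ^ 2 + y ^ 2) ^ (-((n:ℝ) + 3) / 2) := by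
    intro i j x y
    by_cases hxy : x ^ 2 + y ^ 2 = 0
    · have hx : x = 0 := by nlinarith [sq_nonneg x, sq_nonneg y]
      have hy : y = 0 := by nlinarith [sq_nonneg x, sq_nonneg y]
      subst hx; subst hy
      have hne : (-((n:ℝ) + 3) / 2) ≠ 0 := by
        have h3 : (0:ℝ) ≤ (n:ℝ) := Nat.cast_nonneg n
        intro hcon; nlinarith
      rw [hA]
      simp [Real.zero_rpow hne]
    · have hpos : (0:ℝ) < x ^ 2 + y ^ 2 := lt_of_le_of_ne (by positivity) (Ne.symm hxy)
      have hsq : (0:ℝ) < Real.sqrt (x ^ 2 + y ^ 2) := Real.sqrt_pos.mpr hpos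
      have hz : ((x:ℂ) + (y:ℂ) * Complex.I) ≠ 0 := by
        intro h0
        have h1 := congrArg (‖·‖) h0
        rw [Complex.norm_add_mul_I] at h1
        simp at h1
        linarith [hsq, h1]
      have hcosarg : Real.cos (polarAngle x y) = x / Real.sqrt (x ^ 2 + y ^ 2) := by
        unfold polarAngle
        rw [Complex.cos_arg hz]
        simp [Complex.norm_add_mul_I]
      have hsinarg : Real.sin (polarAngle x y) = y / Real.sqrt (x ^ 2 + y ^ 2) := by
        unfold polarAngle
        rw [Complex.sin_arg]
        simp [Complex.norm_add_mul_I]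
      have hcosn : Real.cos ((n:ℝ) * polarAngle x y)
          = ((((x:ℂ) + (y:ℂ) * Complex.I)) ^ n).re / Real.sqrt (x ^ 2 + y ^ 2) ^ n := by
        rw [cos_n_arg n x y]
        field_simp
      have hzero : g (polarAngle x y) + deriv (deriv g) (polarAngle x y)
          + lam * g (polarAngle x y) = 0 := by
        simp only [hg2]
        simp only [hg, hlam]
        ring
      have hsr : Real.sqrt (x ^ 2 + y ^ 2) ^ (n + 3) = (x ^ 2 + y ^ 2) ^ (((n:ℝ) + 3) / 2) := by
        rw [Real.sqrt_eq_rpow, ← Real.rpow_natCast ((x ^ 2 + y ^ 2) ^ ((1:ℝ)/2)) (n + 3),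
          ← Real.rpow_mul hpos.le]
        push_cast
        ring_nf
      have hrp : (x ^ 2 + y ^ 2) ^ (-((n:ℝ) + 3) / 2)
          = 1 / Real.sqrt (x ^ 2 + y ^ 2) ^ (n + 3) := by
        rw [hsr, show (-((n:ℝ) + 3) / 2) = -(((n:ℝ) + 3) / 2) by ring,
          Real.rpow_neg hpos.le]
        rw [one_div]
      rw [hA, hzero, zero_mul, zero_mul, zero_sub]
      simp only [hg1, hn]
      simp only [comp, eTh, eR]
      rw [hcosarg, hsinarg, hcosn, hrp]
      have hpow3 : Real.sqrt (x ^ 2 + y ^ 2) ^ (n + 3)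
          = Real.sqrt (x ^ 2 + y ^ 2) ^ n * Real.sqrt (x ^ 2 + y ^ 2) ^ 3 := by
        rw [pow_add]
      fin_cases i <;> fin_cases j <;> simp only [Fin.zero_eta, Fin.mk_one, Fin.isValue, Fin.reduceEq, if_true, if_pos, reduceIte] <;>
        · rw [hpow3]
          have hsn : Real.sqrt (x ^ 2 + y ^ 2) ^ n ≠ 0 := pow_ne_zero _ (ne_of_gt hsq)
          field_simp
  -- function-level equalities
  have e00 : A 0 0 = fun (a b : ℝ) => -(lam * (a₀ * (n:ℝ))) * -b * a
      * ((((a:ℂ) + (b:ℂ) * Complex.I)) ^ n).re * (a ^ 2 + b ^ 2) ^ (-((n:ℝ) + 3) / 2) := by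
    funext a b; rw [hAF]; norm_num
  have e01 : A 0 1 = fun (a b : ℝ) => -(lam * (a₀ * (n:ℝ))) * -b * b
      * ((((a:ℂ) + (b:ℂ) * Complex.I)) ^ n).re * (a ^ 2 + b ^ 2) ^ (-((n:ℝ) + 3) / 2) := by
    funext a b; rw [hAF]; norm_num
  have e10 : A 1 0 = fun (a b : ℝ) => -(lam * (a₀ * (n:ℝ))) * a * a
      * ((((a:ℂ) + (b:ℂ) * Complex.I)) ^ n).re * (a ^ 2 + b ^ 2) ^ (-((n:ℝ) + 3) / 2) := by
    funext a b; rw [hAF]; norm_num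
  have e11 : A 1 1 = fun (a b : ℝ) => -(lam * (a₀ * (n:ℝ))) * a * b
      * ((((a:ℂ) + (b:ℂ) * Complex.I)) ^ n).re * (a ^ 2 + b ^ 2) ^ (-((n:ℝ) + 3) / 2) := by
    funext a b; rw [hAF]; norm_num
  -- divergence is zero
  have hdiv0 : ∀ r : ℝ, 0 < r → ∀ θ : ℝ, ∀ i : Fin 2,
      pd1 (A i 0) (r * Real.cos θ) (r * Real.sin θ)
        + pd2 (A i 1) (r * Real.cos θ) (r * Real.sin θ) = 0 := by
    intro r hr θ i
    have hP : (r * Real.cos θ) ^ 2 + (r * Real.sin θ) ^ 2 ≠ 0 := by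
      have h : (r * Real.cos θ) ^ 2 + (r * Real.sin θ) ^ 2 = r ^ 2 := by
        rw [mul_pow, mul_pow, ← mul_add, Real.cos_sq_add_sin_sq, mul_one]
      rw [h]
      exact pow_ne_zero _ (ne_of_gt hr)
    have hi : i = 0 ∨ i = 1 := by fin_cases i <;> simp
    rcases hi with rfl | rfl
    · rw [e00, e01]; exact div_free0 n _ _ _ hP
    · rw [e10, e11]; exact div_free1 n _ _ _ hP
  constructor
  · intro r hr θ i
    have hz3 : deriv (deriv (deriv g)) θ + (lam + 1) * deriv g θ = 0 := by
      simp only [hg3]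
      simp only [hg1, hlam]
      ring
    have hz2 : deriv (deriv g) θ + (lam + 1) * g θ = 0 := by
      simp only [hg2]
      simp only [hg, hlam]
      ring
    rw [hz3, hz2]
    simpa using hdiv0 r hr θ i
  · intro x₀ ε hε i
    have hCc : -(lam * (a₀ * (n:ℝ))) = 0 ∨ 2 ≤ n := by
      by_cases h0 : lam * (a₀ * (n:ℝ)) = 0
      · left; rw [h0, neg_zero]
      · right
        have hlamne : lam ≠ 0 := fun h => h0 (by rw [h]; ring)
        have hnne : (n:ℝ) ≠ 0 := fun h => h0 (by rw [h]; ring)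
        have h1 : n ≠ 1 := by
          intro h; apply hlamne; rw [hlam, hn, h]; norm_num
        have h00 : n ≠ 0 := fun h => hnne (by rw [h]; norm_num)
        omega
    have key : ∀ θ : ℝ, ε *
        ((∑ j : Fin 2, A i j (ε * Real.cos θ) (ε * Real.sin θ) * comp (eR θ) j)
          - comp ((ε * Real.cos θ, ε * Real.sin θ) - x₀) i *
            (∑ j : Fin 2,
              (pd1 (A j 0) (ε * Real.cos θ) (ε * Real.sin θ)
                + pd2 (A j 1) (ε * Real.cos θ) (ε * Real.sin θ)) * comp (eR θ) j))
        = -(lam * (a₀ * (n:ℝ))) * (Real.cos ((n:ℝ) * θ)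
            * (if i = 0 then -Real.sin θ else Real.cos θ)) := by
      intro θ
      have hzj := hdiv0 ε hε θ
      rw [Fin.sum_univ_two, Fin.sum_univ_two, hzj 0, hzj 1, zero_mul, zero_mul, add_zero,
        mul_zero, sub_zero, hAF i 0, hAF i 1, Pn_circle n ε θ]
      have hc2 : (ε * Real.cos θ) ^ 2 + (ε * Real.sin θ) ^ 2 = ε ^ 2 := by
        rw [mul_pow, mul_pow, ← mul_add, Real.cos_sq_add_sin_sq, mul_one]
      rw [hc2]
      have hpow : ((ε ^ 2 : ℝ) ^ (-((n:ℝ) + 3) / 2)) * ε ^ (n + 3) = 1 := by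
        rw [← Real.rpow_natCast ε (n + 3), ← Real.rpow_natCast ε 2, ← Real.rpow_mul hε.le,
          ← Real.rpow_add hε,
          show (2:ℕ) * (-((n:ℝ) + 3) / 2) + ((n + 3 : ℕ) : ℝ) = 0 by push_cast; ring,
          Real.rpow_zero]
      simp only [comp, eR]
      have hpy := Real.sin_sq_add_cos_sq θ
      generalize hSg : ((ε ^ 2 : ℝ) ^ (-((n:ℝ) + 3) / 2)) = S at hpow ⊢
      have hi : i = 0 ∨ i = 1 := by fin_cases i <;> simp
      rcases hi with rfl | rfl
      · norm_num
        linear_combination ((lam * (a₀ * (n:ℝ))) * Real.sin θ * Real.cos ((n:ℝ) * θ)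
            * (Real.sin θ ^ 2 + Real.cos θ ^ 2)) * hpow
          + ((lam * (a₀ * (n:ℝ))) * Real.sin θ * Real.cos ((n:ℝ) * θ)) * hpy
      · norm_num
        linear_combination (-(lam * (a₀ * (n:ℝ))) * Real.cos θ * Real.cos ((n:ℝ) * θ)
            * (Real.sin θ ^ 2 + Real.cos θ ^ 2)) * hpow
          + (-(lam * (a₀ * (n:ℝ))) * Real.cos θ * Real.cos ((n:ℝ) * θ)) * hpy
    rw [intervalIntegral.integral_congr (g := fun θ : ℝ => -(lam * (a₀ * (n:ℝ)))
        * (Real.cos ((n:ℝ) * θ) * (if i = 0 then -Real.sin θ else Real.cos θ)))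
        (fun θ _ => key θ),
      intervalIntegral.integral_const_mul]
    rcases hCc with h0 | h2
    · rw [h0, zero_mul]
    · obtain ⟨m, rfl⟩ : ∃ m, n = m + 2 := ⟨n - 2, by omega⟩
      apply mul_eq_zero_of_right
      have hi : i = 0 ∨ i = 1 := by fin_cases i <;> simp
      rcases hi with rfl | rfl
      · norm_num
        exact Icossin ((m:ℝ) + 2) (by positivity)
          (by rw [show (m:ℝ) + 2 - 1 = (m:ℝ) + 1 by ring]; positivity)
          (by rw [show (m:ℝ) + 2 + 1 = ((m + 3 : ℕ) : ℝ) by push_cast; ring]; exact cos2pi (m + 3))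
          (by rw [show (m:ℝ) + 2 - 1 = ((m + 1 : ℕ) : ℝ) by push_cast; ring]; exact cos2pi (m + 1))
      · norm_num
        exact Icoscos ((m:ℝ) + 2) (by positivity)
          (by rw [show (m:ℝ) + 2 - 1 = (m:ℝ) + 1 by ring]; positivity)
          (by rw [show (m:ℝ) + 2 + 1 = ((m + 3 : ℕ) : ℝ) by push_cast; ring]; exact sin2pi (m + 3))
          (by rw [show (m:ℝ) + 2 - 1 = ((m + 1 : ℕ) : ℝ) by push_cast; ring]; exact sin2pi (m + 1))
end

section
/- Fold-normal closure and Gaussian charge for concurrent straight folds: let n ≥ 1, and for i = 0,…,n−1 let γ_i ∈ ℝ, t_i ∈ ℝ² unit vectors (tangents of straight folds through the origin) with normals ν_i = e₃ × t_i (90° rotation). Suppose Σ_i γ_i ν_i = 0. Define the piecewise-constant gradient field G on the angular sectors Ω_i (between fold i and fold i+1) by G|_{Ω_i} = −Σ_{j=0}^{i} γ_j ν_j. Then G is curl-free in each sector (being constant), its tangential component is continuous across each fold S_j (the jump across S_j is −γ_j ν_j, which is normal to S_j), and the total 'Gaussian charge' −(1/2)Σ_{j=1}^{n-1} Σ_{i=0}^{j-1}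 γ_i γ_j ⟨ν_i, t_j⟩ is independent of which fold is labeled 0, i.e. invariant under cyclic relabeling, given the closure condition Σ_i γ_i ν_i = 0. -/
open Real

/-- The Gaussian charge −(1/2) Σ_{i<j} γᵢγⱼ⟨νᵢ,tⱼ⟩ of a family of concurrent folds. -/
noncomputable def gaussCharge (n : ℕ) (γ : Fin n → ℝ) (ν t : Fin n → ℝ × ℝ) : ℝ :=
  -(1 / 2) * ∑ j : Fin n, ∑ i ∈ Finset.univ.filter (fun i => i < j),
    γ i * γ j * ((ν i).1 * (t j).1 + (ν i).2 * (t j).2)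


lemma cyc_aux (m : ℕ) (f : Fin (m+1) → Fin (m+1) → ℝ)
    (hanti : ∀ i j, f j i = - f i j) (hrow : ∀ j, ∑ i, f i j = 0) :
    ∑ j : Fin (m+1), ∑ i ∈ Finset.univ.filter (fun i => i < j), f (i+1) (j+1)
      = ∑ j : Fin (m+1), ∑ i ∈ Finset.univ.filter (fun i => i < j), f i j := by
  have f00 : ∀ i, f i i = 0 := fun i => by have := hanti i i; linarith
  have key : ∀ F : Fin (m+1) → Fin (m+1) → ℝ,
      (∑ j : Fin (m+1), ∑ i ∈ Finset.univ.filter (fun i => i < j), F i j)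
        = ∑ p : Fin (m+1) × Fin (m+1), if p.1 < p.2 then F p.1 p.2 else 0 := by
    intro F
    rw [Fintype.sum_prod_type_right]
    exact Finset.sum_congr rfl fun j _ => by rw [Finset.sum_filter]
  rw [key, key]
  have reidx : (∑ p : Fin (m+1) × Fin (m+1), if p.1 < p.2 then f p.1 p.2 else 0)
      = ∑ p : Fin (m+1) × Fin (m+1), if p.1 + 1 < p.2 + 1 then f (p.1+1) (p.2+1) else 0 := by
    exact (Fintype.sum_equiv ((Equiv.addRight (1 : Fin (m+1))).prodCongr (Equiv.addRight 1))
      _ _ fun p => rfl).symm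
  rw [reidx, ← sub_eq_zero, ← Finset.sum_sub_distrib]
  have step : ∀ p : Fin (m+1) × Fin (m+1),
      ((if p.1 < p.2 then f (p.1+1) (p.2+1) else 0)
        - (if p.1 + 1 < p.2 + 1 then f (p.1+1) (p.2+1) else 0))
      = (if p.2 = Fin.last m ∧ p.1 ≠ Fin.last m then f (p.1+1) (p.2+1) else 0)
        - (if p.1 = Fin.last m ∧ p.2 ≠ Fin.last m then f (p.1+1) (p.2+1) else 0) := by
    intro p
    have hlt : ∀ q : Fin (m+1), q ≠ Fin.last m → ((q+1) : Fin (m+1)).val = q.val + 1 := by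
      intro q hq
      rw [Fin.val_add_one, if_neg hq]
    by_cases h1 : p.1 = Fin.last m <;> by_cases h2 : p.2 = Fin.last m
    · have hA : ¬ (p.1 < p.2) := by rw [h1, h2]; exact lt_irrefl _
      have hB : ¬ (p.1 + 1 < p.2 + 1) := by rw [h1, h2]; exact lt_irrefl _
      have hC : ¬ (p.2 = Fin.last m ∧ p.1 ≠ Fin.last m) := fun h => h.2 h1
      have hD : ¬ (p.1 = Fin.last m ∧ p.2 ≠ Fin.last m) := fun h => h.2 h2
      rw [if_neg hA, if_neg hB, if_neg hC, if_neg hD]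
    · have hA : ¬ (p.1 < p.2) := by rw [h1]; exact not_lt.2 (Fin.le_last _)
      have hB : p.1 + 1 < p.2 + 1 := by
        rw [h1, Fin.last_add_one, Fin.lt_def, Fin.val_zero, hlt p.2 h2]
        omega
      have hC : ¬ (p.2 = Fin.last m ∧ p.1 ≠ Fin.last m) := fun h => h2 h.1
      rw [if_neg hA, if_pos hB, if_neg hC, if_pos ⟨h1, h2⟩]
    · have hA : p.1 < p.2 := by rw [h2]; exact Fin.lt_last_iff_ne_last.2 h1
      have hB : ¬ (p.1 + 1 < p.2 + 1) := by
        rw [h2, Fin.last_add_one]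
        exact not_lt.2 (Fin.zero_le _)
      have hD : ¬ (p.1 = Fin.last m ∧ p.2 ≠ Fin.last m) := fun h => h1 h.1
      rw [if_pos hA, if_neg hB, if_pos ⟨h2, h1⟩, if_neg hD]
    · have hAB : (p.1 < p.2) ↔ (p.1 + 1 < p.2 + 1) := by
        rw [Fin.lt_def, Fin.lt_def, hlt p.1 h1, hlt p.2 h2]
        omega
      have hC : ¬ (p.2 = Fin.last m ∧ p.1 ≠ Fin.last m) := fun h => h2 h.1
      have hD : ¬ (p.1 = Fin.last m ∧ p.2 ≠ Fin.last m) := fun h => h1 h.1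
      rw [if_neg hC, if_neg hD]
      by_cases hA : p.1 < p.2
      · rw [if_pos hA, if_pos (hAB.1 hA)]; ring
      · rw [if_neg hA, if_neg (fun h => hA (hAB.2 h))]
  rw [Finset.sum_congr rfl fun p _ => step p, Finset.sum_sub_distrib]
  have T1 : (∑ p : Fin (m+1) × Fin (m+1),
      if p.2 = Fin.last m ∧ p.1 ≠ Fin.last m then f (p.1+1) (p.2+1) else 0) = 0 := by
    rw [Fintype.sum_prod_type]
    have inner : ∀ i : Fin (m+1),
        (∑ j : Fin (m+1), if j = Fin.last m ∧ i ≠ Fin.last m then f (i+1) (j+1) else 0)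
          = f (i+1) 0 := by
      intro i
      by_cases hi : i = Fin.last m
      · have : ∀ j : Fin (m+1),
            (if j = Fin.last m ∧ i ≠ Fin.last m then f (i+1) (j+1) else 0) = 0 := by
          intro j
          have : ¬ (j = Fin.last m ∧ i ≠ Fin.last m) := fun h => h.2 hi
          rw [if_neg this]
        rw [Finset.sum_congr rfl fun j _ => this j, Finset.sum_const, smul_zero,
          hi, Fin.last_add_one, f00]
      · have : ∀ j : Fin (m+1),
            (if j = Fin.last m ∧ i ≠ Fin.last m then f (i+1) (j+1) else 0)
              = (if j = Fin.last m then f (i+1) (j+1) else 0) := by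
          intro j
          by_cases hj : j = Fin.last m
          · rw [if_pos ⟨hj, hi⟩, if_pos hj]
          · have hC : ¬ (j = Fin.last m ∧ i ≠ Fin.last m) := fun h => hj h.1
            rw [if_neg hC, if_neg hj]
        rw [Finset.sum_congr rfl fun j _ => this j, Finset.sum_ite_eq']
        simp [Fin.last_add_one]
    rw [Finset.sum_congr rfl fun i _ => inner i]
    calc (∑ i : Fin (m+1), f (i+1) 0) = ∑ i : Fin (m+1), f i 0 :=
          Equiv.sum_comp (Equiv.addRight 1) (fun i => f i 0)
      _ = 0 := hrow 0
  have T2 : (∑ p : Fin (m+1) × Fin (m+1),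
      if p.1 = Fin.last m ∧ p.2 ≠ Fin.last m then f (p.1+1) (p.2+1) else 0) = 0 := by
    rw [Fintype.sum_prod_type_right]
    have inner : ∀ j : Fin (m+1),
        (∑ i : Fin (m+1), if i = Fin.last m ∧ j ≠ Fin.last m then f (i+1) (j+1) else 0)
          = f 0 (j+1) := by
      intro j
      by_cases hj : j = Fin.last m
      · have : ∀ i : Fin (m+1),
            (if i = Fin.last m ∧ j ≠ Fin.last m then f (i+1) (j+1) else 0) = 0 := by
          intro i
          have : ¬ (i = Fin.last m ∧ j ≠ Fin.last m) := fun h => h.2 hj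
          rw [if_neg this]
        rw [Finset.sum_congr rfl fun i _ => this i, Finset.sum_const, smul_zero,
          hj, Fin.last_add_one, f00]
      · have : ∀ i : Fin (m+1),
            (if i = Fin.last m ∧ j ≠ Fin.last m then f (i+1) (j+1) else 0)
              = (if i = Fin.last m then f (i+1) (j+1) else 0) := by
          intro i
          by_cases hi : i = Fin.last m
          · rw [if_pos ⟨hi, hj⟩, if_pos hi]
          · have hC : ¬ (i = Fin.last m ∧ j ≠ Fin.last m) := fun h => hi h.1
            rw [if_neg hC, if_neg hi]
        rw [Finset.sum_congr rfl fun i _ => this i, Finset.sum_ite_eq']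
        simp [Fin.last_add_one]
    rw [Finset.sum_congr rfl fun j _ => inner j]
    have e1 : (∑ j : Fin (m+1), f 0 (j+1)) = ∑ j : Fin (m+1), f 0 j :=
      Equiv.sum_comp (Equiv.addRight 1) (fun j => f 0 j)
    have e2 : (∑ j : Fin (m+1), f 0 j) = - ∑ j : Fin (m+1), f j 0 := by
      rw [← Finset.sum_neg_distrib]
      exact Finset.sum_congr rfl fun j _ => by rw [← hanti]
    rw [e1, e2, hrow 0, neg_zero]
  rw [T1, T2, sub_zero]

/-- Concurrent straight folds: given unit tangents t_i with normals ν_i = e₃ × t_i and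
closure Σ γᵢνᵢ = 0, the sector gradients G_i = −Σ_{j≤i} γⱼνⱼ jump by −γⱼνⱼ across fold j,
the jump is orthogonal to the fold tangent (tangential continuity), and the Gaussian
charge is invariant under cyclic relabeling of the folds. -/
theorem concurrent_folds (n : ℕ) (hn : 1 ≤ n) (γ : Fin n → ℝ) (t : Fin n → ℝ × ℝ)
    (ht : ∀ i, (t i).1 ^ 2 + (t i).2 ^ 2 = 1) (ν : Fin n → ℝ × ℝ)
    (hν : ∀ i, ν i = (-(t i).2, (t i).1))
    (hclose : ∑ i : Fin n, γ i • ν i = (0 : ℝ × ℝ)) (G : Fin n → ℝ × ℝ)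
    (hG : ∀ i, G i = -∑ j ∈ Finset.univ.filter (fun j => j ≤ i), γ j • ν j) :
    (∀ i j : Fin n, (j : ℕ) = (i : ℕ) + 1 → G j - G i = -(γ j • ν j)) ∧
    (∀ j : Fin n, (-(γ j) * (ν j).1) * (t j).1 + (-(γ j) * (ν j).2) * (t j).2 = 0) ∧
    (∀ σ : Fin n → Fin n, (∀ k : Fin n, (σ k : ℕ) = ((k : ℕ) + 1) % n) →
      gaussCharge n (γ ∘ σ) (ν ∘ σ) (t ∘ σ) = gaussCharge n γ ν t) := by
  obtain ⟨m, rfl⟩ : ∃ m, n = m + 1 := ⟨n - 1, by omega⟩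
  refine ⟨?_, ?_, ?_⟩
  · intro i j hij
    rw [hG, hG]
    have hins : Finset.univ.filter (fun k => k ≤ j)
        = insert j (Finset.univ.filter (fun k => k ≤ i)) := by
      ext k
      simp only [Finset.mem_filter, Finset.mem_univ, true_and, Finset.mem_insert,
        Fin.le_def, Fin.ext_iff, hij]
      omega
    have hnot : j ∉ Finset.univ.filter (fun k => k ≤ i) := by
      simp only [Finset.mem_filter, Finset.mem_univ, true_and, Fin.le_def, hij]
      omega
    rw [hins, Finset.sum_insert hnot]
    abel
  · intro j
    rw [hν]
    ring
  · intro σ hσ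
    have hσ1 : ∀ k : Fin (m+1), σ k = k + 1 := by
      intro k
      apply Fin.ext
      rw [hσ, Fin.val_add_one]
      by_cases hk : k = Fin.last m
      · rw [if_pos hk, hk, Fin.val_last, Nat.mod_self]
      · have hkm : (k : ℕ) < m := by
          have h1 := k.isLt
          have h2 : (k : ℕ) ≠ m := fun h => hk (Fin.ext (by rw [h, Fin.val_last]))
          omega
        rw [if_neg hk, Nat.mod_eq_of_lt (by omega)]
    set f : Fin (m+1) → Fin (m+1) → ℝ :=
      fun i j => γ i * γ j * ((ν i).1 * (t j).1 + (ν i).2 * (t j).2) with hf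
    have hanti : ∀ i j, f j i = - f i j := by
      intro i j
      simp only [hf, hν]
      ring
    have hrow : ∀ j, ∑ i, f i j = 0 := by
      intro j
      have h1 : (∑ i : Fin (m+1), γ i * (ν i).1) = 0 := by
        have h := congrArg Prod.fst hclose
        simpa [Prod.fst_sum] using h
      have h2 : (∑ i : Fin (m+1), γ i * (ν i).2) = 0 := by
        have h := congrArg Prod.snd hclose
        simpa [Prod.snd_sum] using h
      calc ∑ i, f i j
          = ∑ i : Fin (m+1), ((γ j * (t j).1) * (γ i * (ν i).1)
              + (γ j * (t j).2) * (γ i * (ν i).2)) :=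
            Finset.sum_congr rfl fun i _ => by simp only [hf]; ring
        _ = (γ j * (t j).1) * (∑ i : Fin (m+1), γ i * (ν i).1)
              + (γ j * (t j).2) * (∑ i : Fin (m+1), γ i * (ν i).2) := by
            rw [Finset.sum_add_distrib, Finset.mul_sum, Finset.mul_sum]
        _ = 0 := by rw [h1, h2]; ring
    have key := cyc_aux m f hanti hrow
    unfold gaussCharge
    congr 1
    calc ∑ j : Fin (m+1), ∑ i ∈ Finset.univ.filter (fun i => i < j),
          (γ ∘ σ) i * (γ ∘ σ) j * (((ν ∘ σ) i).1 * ((t ∘ σ) j).1 + ((ν ∘ σ) i).2 * ((t ∘ σ) j).2)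
        = ∑ j : Fin (m+1), ∑ i ∈ Finset.univ.filter (fun i => i < j), f (i+1) (j+1) := by
          refine Finset.sum_congr rfl fun j _ => Finset.sum_congr rfl fun i _ => ?_
          simp only [Function.comp_apply, hσ1, hf]
      _ = ∑ j : Fin (m+1), ∑ i ∈ Finset.univ.filter (fun i => i < j), f i j := key
end
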